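/- Let n ≥ 1 and let Σ ⊂ ℝⁿ⁺¹ be a closed set whose parabolic diameter is infinite. Let σ be a Borel measure on ℝⁿ⁺¹ supported in Σ satisfying the ADR condition M₀⁻¹ρⁿ⁺¹ ≤ σ(Q_ρ(z,τ) ∩ Σ) ≤ M₀ρⁿ⁺¹ for every (z,τ) ∈ Σ and every 0 < ρ < ∞, where M₀ ≥ 1. Then the time-span of Σ is infinite: sup{t : (x,t) ∈ Σ} − inf{t : (x,t) ∈ Σ} = ∞. -/

import Mathlib

open MeasureTheory Set Filter Topology

noncomputable section

/-- Points of space-time `ℝⁿ × ℝ`. -/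
abbrev Pt (n : ℕ) : Type := EuclideanSpace ℝ (Fin n) × ℝ

/-- The open parabolic cube `Q_r(c)`. -/
def pcube (n : ℕ) (c : Pt n) (r : ℝ) : Set (Pt n) :=
  {p | (∀ i, |p.1 i - c.1 i| < r) ∧ c.2 - r ^ 2 < p.2 ∧ p.2 < c.2 + r ^ 2}

/-- The time-backward half cube `Q_r⁻(c)`. -/
def pcubeMinus (n : ℕ) (c : Pt n) (r : ℝ) : Set (Pt n) :=
  {p | (∀ i, |p.1 i - c.1 i| < r) ∧ c.2 - r ^ 2 < p.2 ∧ p.2 < c.2}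

/-- The time-forward half cube `Q_r⁺(c)`. -/
def pcubePlus (n : ℕ) (c : Pt n) (r : ℝ) : Set (Pt n) :=
  {p | (∀ i, |p.1 i - c.1 i| < r) ∧ c.2 < p.2 ∧ p.2 < c.2 + r ^ 2}

/-- The parabolic norm `‖(X,t)‖ = |X| + |t|^{1/2}`. -/
def pnorm (n : ℕ) (p : Pt n) : ℝ := ‖p.1‖ + Real.sqrt |p.2|

/-- The parabolic distance. -/
def pdist (n : ℕ) (p q : Pt n) : ℝ := pnorm n (p.1 - q.1, p.2 - q.2)

/-- The parabolic diameter of a set (in `ℝ≥0∞`). -/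
def pdiam (n : ℕ) (A : Set (Pt n)) : ENNReal :=
  ⨆ p ∈ A, ⨆ q ∈ A, ENNReal.ofReal (pdist n p q)

/-- The parabolic distance from a point to a set. -/
def pdistTo (n : ℕ) (p : Pt n) (A : Set (Pt n)) : ℝ := sInf ((pdist n p) '' A)

/-- The parabolic boundary `𝒫Ω`. -/
def parabolicBdry (n : ℕ) (Ω : Set (Pt n)) : Set (Pt n) :=
  {p | p ∈ frontier Ω ∧ ∀ r > 0, (pcubeMinus n p r ∩ Ωᶜ).Nonempty}

/-- The bottom boundary `ℬΩ`. -/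
def bottomBdry (n : ℕ) (Ω : Set (Pt n)) : Set (Pt n) :=
  {p | p ∈ parabolicBdry n Ω ∧ ∃ ε > 0, pcubePlus n p ε ⊆ Ω}

/-- The abnormal boundary `∂ₐΩ`. -/
def abnormalBdry (n : ℕ) (Ω : Set (Pt n)) : Set (Pt n) :=
  {p | p ∈ frontier Ω ∧ ∃ ε > 0, pcubeMinus n p ε ⊆ Ω}

/-- The singular boundary `∂ₛΩ`. -/
def singBdry (n : ℕ) (Ω : Set (Pt n)) : Set (Pt n) :=
  {p | p ∈ abnormalBdry n Ω ∧ ∃ ε > 0, pcubePlus n p ε ∩ Ω = ∅}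

/-- The essential boundary `∂ₑΩ = ∂Ω ∖ ∂ₛΩ`. -/
def essBdry (n : ℕ) (Ω : Set (Pt n)) : Set (Pt n) := frontier Ω \ singBdry n Ω

/-- `T_min(Ω)`, as an extended real number. -/
def parTmin (n : ℕ) (Ω : Set (Pt n)) : EReal := ⨅ p ∈ Ω, (p.2 : EReal)

/-- `T_max(Ω)`, as an extended real number. -/
def parTmax (n : ℕ) (Ω : Set (Pt n)) : EReal := ⨆ p ∈ Ω, (p.2 : EReal)

/-- The quasi-lateral boundary `Σ`:  `∂Ω` with the time slice of `ℬΩ` at `t = T_min(Ω)`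
removed (when `T_min(Ω) > -∞`), and the time slice of `∂ₛΩ` at `t = T_max(Ω)` removed
(when `T_max(Ω) < ∞`).  Since no real time coordinate can equal `±∞`, the `EReal`
formulation below encodes exactly this. -/
def quasiLateral (n : ℕ) (Ω : Set (Pt n)) : Set (Pt n) :=
  frontier Ω \
    ({p | p ∈ bottomBdry n Ω ∧ (p.2 : EReal) = parTmin n Ω} ∪
     {p | p ∈ singBdry n Ω ∧ (p.2 : EReal) = parTmax n Ω})

/-- The free-space heat kernel. -/
def heatKernel (n : ℕ) (X : EuclideanSpace ℝ (Fin n)) (t : ℝ)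
    (y : EuclideanSpace ℝ (Fin n)) (s : ℝ) : ℝ :=
  if s < t then
    (4 * Real.pi * (t - s)) ^ (-(n : ℝ) / 2) * Real.exp (-‖X - y‖ ^ 2 / (4 * (t - s)))
  else 0

/-- Time derivative `∂ₜ u`. -/
def timeDeriv (n : ℕ) (u : Pt n → ℝ) (p : Pt n) : ℝ := deriv (fun τ => u (p.1, τ)) p.2

/-- Spatial Laplacian `Δ_X u`. -/
def spaceLaplacian (n : ℕ) (u : Pt n → ℝ) (p : Pt n) : ℝ :=
  ∑ i : Fin n,
    iteratedDeriv 2 (fun h : ℝ => u (p.1 + h • EuclideanSpace.single i (1 : ℝ), p.2)) 0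

/-- A classical supersolution of the heat equation on `U`: continuous on `U`,
twice continuously differentiable in `X` and once in `t`, with `∂ₜ u - Δ_X u ≥ 0`. -/
structure IsSupersolutionOn (n : ℕ) (u : Pt n → ℝ) (U : Set (Pt n)) : Prop where
  cont : ContinuousOn u U
  smoothX : ∀ p ∈ U, ContDiffAt ℝ 2 (fun X => u (X, p.2)) p.1
  smoothT : ∀ p ∈ U, ContDiffAt ℝ 1 (fun τ => u (p.1, τ)) p.2
  ineq : ∀ p ∈ U, spaceLaplacian n u p ≤ timeDeriv n u p

/-- A classical subsolution of the heat equation on `U`. -/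
structure IsSubsolutionOn (n : ℕ) (u : Pt n → ℝ) (U : Set (Pt n)) : Prop where
  cont : ContinuousOn u U
  smoothX : ∀ p ∈ U, ContDiffAt ℝ 2 (fun X => u (X, p.2)) p.1
  smoothT : ∀ p ∈ U, ContDiffAt ℝ 1 (fun τ => u (p.1, τ)) p.2
  ineq : ∀ p ∈ U, timeDeriv n u p ≤ spaceLaplacian n u p

/-- A caloric function (classical solution of the heat equation) on `U`. -/
structure IsCaloricOn (n : ℕ) (u : Pt n → ℝ) (U : Set (Pt n)) : Prop where
  cont : ContinuousOn u U
  smoothX : ∀ p ∈ U, ContDiffAt ℝ 2 (fun X => u (X, p.2)) p.1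
  smoothT : ∀ p ∈ U, ContDiffAt ℝ 1 (fun τ => u (p.1, τ)) p.2
  eq : ∀ p ∈ U, timeDeriv n u p = spaceLaplacian n u p
/-- for a closed parabolic ADR set of infinite diameter, the time-span is
infinite. -/
theorem statement_8 (n : ℕ) (hn : 1 ≤ n) (M₀ : ℝ) (hM₀ : 1 ≤ M₀)
    (S : Set (Pt n)) (σ : Measure (Pt n))
    (hS : IsClosed S) (hsupp : σ Sᶜ = 0) (hdiam : pdiam n S = ⊤)
    (hADR : ∀ z ∈ S, ∀ ρ : ℝ, 0 < ρ →
      ENNReal.ofReal (M₀⁻¹ * ρ ^ (n + 1)) ≤ σ (pcube n z ρ ∩ S) ∧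
      σ (pcube n z ρ ∩ S) ≤ ENNReal.ofReal (M₀ * ρ ^ (n + 1))) :
    (⨆ p ∈ S, (p.2 : EReal)) - (⨅ p ∈ S, (p.2 : EReal)) = ⊤ := by
  classical
  by_contra hcon
  have hM₀pos : (0:ℝ) < M₀ := lt_of_lt_of_le one_pos hM₀
  -- S is nonempty
  have hSne : S.Nonempty := by
    rcases S.eq_empty_or_nonempty with h | h
    · rw [h] at hdiam; simp [pdiam] at hdiam
    · exact h
  obtain ⟨z, hz⟩ := hSne
  set Msup := ⨆ p ∈ S, (p.2 : EReal) with hMsupdef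
  set Minf := ⨅ p ∈ S, (p.2 : EReal) with hMinfdef
  have hle_sup : ∀ p ∈ S, (p.2 : EReal) ≤ Msup := fun p hp => le_iSup₂ (f := fun p (_ : p ∈ S) => (p.2 : EReal)) p hp
  have hle_inf : ∀ p ∈ S, Minf ≤ (p.2 : EReal) := fun p hp => iInf₂_le (f := fun p (_ : p ∈ S) => (p.2 : EReal)) p hp
  have hMsup_ne_bot : Msup ≠ ⊥ := by
    intro h
    have := hle_sup z hz
    rw [h, le_bot_iff] at this
    exact EReal.coe_ne_bot _ this
  have hMinf_ne_top : Minf ≠ ⊤ := by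
    intro h
    have := hle_inf z hz
    rw [h, top_le_iff] at this
    exact EReal.coe_ne_top _ this
  have hMinf_ne_bot : Minf ≠ ⊥ := by
    intro h
    exact hcon (h ▸ EReal.sub_bot hMsup_ne_bot)
  have hMsup_ne_top : Msup ≠ ⊤ := by
    intro h
    rw [h] at hcon
    apply hcon
    rcases Minf with _ | _ | y
    · exact EReal.top_sub_bot
    · exact absurd rfl hMinf_ne_top
    · exact EReal.top_sub_coe y
  set b := Msup.toReal with hbdef
  set a := Minf.toReal with hadef
  have hb : (b : EReal) = Msup := EReal.coe_toReal hMsup_ne_top hMsup_ne_bot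
  have ha : (a : EReal) = Minf := EReal.coe_toReal hMinf_ne_top hMinf_ne_bot
  have hub : ∀ p ∈ S, p.2 ≤ b := fun p hp =>
    EReal.coe_le_coe_iff.mp (hb ▸ hle_sup p hp)
  have hlb : ∀ p ∈ S, a ≤ p.2 := fun p hp =>
    EReal.coe_le_coe_iff.mp (ha ▸ hle_inf p hp)
  have hab : a ≤ b := le_trans (hlb z hz) (hub z hz)
  clear_value a b
  -- the fixed small scale r, with b - a < r ^ 2
  set r : ℝ := Real.sqrt (b - a) + 1 with hrdef
  have hr0 : 0 < r := by positivity
  have hba : b - a < r ^ 2 := by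
    have h1 : Real.sqrt (b - a) ^ 2 = b - a := Real.sq_sqrt (by linarith)
    have h2 : 0 ≤ Real.sqrt (b - a) := Real.sqrt_nonneg _
    nlinarith
  clear_value r
  -- the big scale ρ = m * r
  set C : ℝ := M₀ ^ 2 * 2 ^ (n + 1) * 3 ^ n with hCdef
  have hC0 : 0 < C := by positivity
  set m : ℕ := ⌈C⌉₊ + 1 with hmdef
  have hm1 : 1 ≤ m := Nat.le_add_left 1 _
  have hmC : C < (m : ℝ) := by
    have h1 : C ≤ (⌈C⌉₊ : ℝ) := Nat.le_ceil C
    have h2 : ((⌈C⌉₊ : ℕ) : ℝ) < ((⌈C⌉₊ + 1 : ℕ) : ℝ) := by exact_mod_cast Nat.lt_succ_self _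
    rw [hmdef]
    linarith
  clear_value C m
  set ρ : ℝ := (m : ℝ) * r with hρdef
  have hρ0 : 0 < ρ := by
    apply mul_pos _ hr0
    exact_mod_cast hm1
  clear_value ρ
  -- the grid cells
  set cell : (Fin n → ℤ) → Set (Pt n) := fun k =>
    {p : Pt n | ∀ i, (k i : ℝ) * r ≤ p.1 i - z.1 i ∧ p.1 i - z.1 i < ((k i : ℝ) + 1) * r}
    with hcelldef
  set F : Finset (Fin n → ℤ) := Fintype.piFinset fun _ => Finset.Icc (-(m : ℤ)) m with hFdef
  -- covering
  have hcover : pcube n z ρ ∩ S ⊆ ⋃ k ∈ F, (cell k ∩ S) := by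
    rintro p ⟨⟨hsp, _, _⟩, hpS⟩
    refine Set.mem_iUnion₂.mpr ⟨fun i => ⌊(p.1 i - z.1 i) / r⌋, ?_, ?_, hpS⟩
    · rw [hFdef, Fintype.mem_piFinset]
      intro i
      have habs := hsp i
      rw [abs_lt] at habs
      rw [Finset.mem_Icc]
      constructor
      · rw [Int.le_floor]
        push_cast
        rw [le_div_iff₀ hr0]
        have : -((m:ℝ) * r) < p.1 i - z.1 i := by
          have := habs.1; rw [hρdef] at this; linarith
        linarith
      · have h1 : (⌊(p.1 i - z.1 i) / r⌋ : ℝ) ≤ (p.1 i - z.1 i) / r := Int.floor_le _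
        have h2 : (p.1 i - z.1 i) / r < (m : ℝ) := by
          rw [div_lt_iff₀ hr0]
          have := habs.2; rw [hρdef] at this; linarith
        have : (⌊(p.1 i - z.1 i) / r⌋ : ℝ) < ((m : ℤ) : ℝ) := by push_cast; linarith
        exact le_of_lt (by exact_mod_cast this)
    · intro i
      constructor
      · have h1 : (⌊(p.1 i - z.1 i) / r⌋ : ℝ) ≤ (p.1 i - z.1 i) / r := Int.floor_le _
        calc (⌊(p.1 i - z.1 i) / r⌋ : ℝ) * r ≤ ((p.1 i - z.1 i) / r) * r :=
              mul_le_mul_of_nonneg_right h1 hr0.le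
          _ = p.1 i - z.1 i := div_mul_cancel₀ _ hr0.ne'
      · have h1 : (p.1 i - z.1 i) / r < ⌊(p.1 i - z.1 i) / r⌋ + 1 := Int.lt_floor_add_one _
        calc p.1 i - z.1 i = ((p.1 i - z.1 i) / r) * r := (div_mul_cancel₀ _ hr0.ne').symm
          _ < ((⌊(p.1 i - z.1 i) / r⌋ : ℝ) + 1) * r := by
              apply mul_lt_mul_of_pos_right _ hr0
              exact h1
  -- each cell has small measure
  have hcellbound : ∀ k ∈ F, σ (cell k ∩ S) ≤ ENNReal.ofReal (M₀ * (2 * r) ^ (n + 1)) := by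
    intro k _
    rcases (cell k ∩ S).eq_empty_or_nonempty with he | ⟨w, hwcell, hwS⟩
    · rw [he, measure_empty]
      exact zero_le
    · have hsub : cell k ∩ S ⊆ pcube n w (2 * r) ∩ S := by
        rintro p ⟨hpcell, hpS⟩
        refine ⟨⟨?_, ?_, ?_⟩, hpS⟩
        · intro i
          have h1 := hpcell i
          have h2 := hwcell i
          rw [abs_lt]
          constructor <;> nlinarith [h1.1, h1.2, h2.1, h2.2]
        · have h1 := hlb p hpS
          have h2 := hub w hwS
          have h3 := hlb w hwS
          have h4 := hub p hpS
          nlinarith [sq_nonneg r, hr0]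
        · have h1 := hlb p hpS
          have h2 := hub w hwS
          have h3 := hlb w hwS
          have h4 := hub p hpS
          nlinarith [sq_nonneg r, hr0]
      calc σ (cell k ∩ S) ≤ σ (pcube n w (2 * r) ∩ S) := measure_mono hsub
        _ ≤ ENNReal.ofReal (M₀ * (2 * r) ^ (n + 1)) :=
            (hADR w hwS (2 * r) (by linarith)).2
  -- upper bound for the big cube
  have hFcard : F.card = (2 * m + 1) ^ n := by
    rw [hFdef, Fintype.card_piFinset_const, Int.card_Icc]
    congr 1
    omega
  have hupper : σ (pcube n z ρ ∩ S) ≤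
      ENNReal.ofReal (((2 * m + 1 : ℕ) : ℝ) ^ n * (M₀ * (2 * r) ^ (n + 1))) := by
    calc σ (pcube n z ρ ∩ S) ≤ σ (⋃ k ∈ F, (cell k ∩ S)) := measure_mono hcover
      _ ≤ ∑ k ∈ F, σ (cell k ∩ S) := measure_biUnion_finset_le F _
      _ ≤ ∑ _k ∈ F, ENNReal.ofReal (M₀ * (2 * r) ^ (n + 1)) :=
          Finset.sum_le_sum hcellbound
      _ = F.card * ENNReal.ofReal (M₀ * (2 * r) ^ (n + 1)) := by
          rw [Finset.sum_const, nsmul_eq_mul]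
      _ = ENNReal.ofReal (((2 * m + 1 : ℕ) : ℝ) ^ n * (M₀ * (2 * r) ^ (n + 1))) := by
          rw [hFcard]
          have hh := ENNReal.ofReal_mul (p := ((2 * m + 1 : ℕ) : ℝ) ^ n)
            (q := M₀ * (2 * r) ^ (n + 1)) (by positivity)
          rw [hh]
          congr 1
          rw [← ENNReal.ofReal_natCast ((2 * m + 1) ^ n)]
          congr 1
          push_cast
          ring
  -- combine with the lower bound
  have hlower := (hADR z hz ρ hρ0).1
  have hreal : M₀⁻¹ * ρ ^ (n + 1) ≤ ((2 * m + 1 : ℕ) : ℝ) ^ n * (M₀ * (2 * r) ^ (n + 1)) := by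
    have := hlower.trans hupper
    rw [ENNReal.ofReal_le_ofReal_iff (by positivity)] at this
    exact this
  -- final algebra: contradiction with m > C
  have hN : ((2 * m + 1 : ℕ) : ℝ) ≤ 3 * (m : ℝ) := by
    have : (1:ℝ) ≤ (m:ℝ) := by exact_mod_cast hm1
    push_cast
    linarith
  have hmpos : (0:ℝ) < (m:ℝ) := by exact_mod_cast hm1
  have key : (m : ℝ) ^ (n + 1) ≤ C * (m : ℝ) ^ n := by
    have h1 : ρ ^ (n + 1) = (m : ℝ) ^ (n + 1) * r ^ (n + 1) := by
      rw [hρdef, mul_pow]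
    have h2 : (2 * r) ^ (n + 1) = 2 ^ (n + 1) * r ^ (n + 1) := by rw [mul_pow]
    have h3 : M₀⁻¹ * ((m : ℝ) ^ (n + 1) * r ^ (n + 1)) ≤
        ((2 * m + 1 : ℕ) : ℝ) ^ n * (M₀ * (2 ^ (n + 1) * r ^ (n + 1))) := by
      rw [← h2, ← h1]
      exact hreal
    have h4 : (m : ℝ) ^ (n + 1) * r ^ (n + 1) ≤
        M₀ * (((2 * m + 1 : ℕ) : ℝ) ^ n * (M₀ * (2 ^ (n + 1) * r ^ (n + 1)))) := by
      have h := mul_le_mul_of_nonneg_left h3 hM₀pos.le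
      rwa [← mul_assoc, mul_inv_cancel₀ hM₀pos.ne', one_mul] at h
    have hrpow : (0:ℝ) < r ^ (n + 1) := by positivity
    have h5 : (m : ℝ) ^ (n + 1) ≤ M₀ ^ 2 * ((2 * m + 1 : ℕ) : ℝ) ^ n * 2 ^ (n + 1) := by
      rw [← mul_le_mul_iff_of_pos_right hrpow]
      calc (m : ℝ) ^ (n + 1) * r ^ (n + 1) ≤
            M₀ * (((2 * m + 1 : ℕ) : ℝ) ^ n * (M₀ * (2 ^ (n + 1) * r ^ (n + 1)))) := h4
        _ = M₀ ^ 2 * ((2 * m + 1 : ℕ) : ℝ) ^ n * 2 ^ (n + 1) * r ^ (n + 1) := by ring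
    have h6 : ((2 * m + 1 : ℕ) : ℝ) ^ n ≤ 3 ^ n * (m : ℝ) ^ n := by
      calc ((2 * m + 1 : ℕ) : ℝ) ^ n ≤ (3 * (m : ℝ)) ^ n :=
            pow_le_pow_left₀ (by positivity) hN n
        _ = 3 ^ n * (m : ℝ) ^ n := mul_pow _ _ _
    calc (m : ℝ) ^ (n + 1) ≤ M₀ ^ 2 * ((2 * m + 1 : ℕ) : ℝ) ^ n * 2 ^ (n + 1) := h5
      _ ≤ M₀ ^ 2 * (3 ^ n * (m : ℝ) ^ n) * 2 ^ (n + 1) := by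
          apply mul_le_mul_of_nonneg_right _ (by positivity)
          exact mul_le_mul_of_nonneg_left h6 (by positivity)
      _ = C * (m : ℝ) ^ n := by rw [hCdef]; ring
  have hfinal : (m : ℝ) ≤ C := by
    have hpn : (0:ℝ) < (m : ℝ) ^ n := by positivity
    have h : (m : ℝ) * (m : ℝ) ^ n ≤ C * (m : ℝ) ^ n := by
      rw [← pow_succ']
      exact key
    exact le_of_mul_le_mul_right h hpn
  linarith
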